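/- Let G be a simple graph on vertex set V, let W ⊆ V be a nonempty set of vertices inducing a connected subgraph of G, and let e = {a, b} be an edge of G with a ∉ W and b ∉ W. Let G/W be the contraction of W: the simple graph on (V \ W) ∪ {⋆} in which two vertices of V \ W are adjacent iff they are adjacent in G, and a vertex x ∈ V \ W is adjacent to ⋆ iff x is adjacent in G to some vertex of W. Then e is a bridge of G if and only if e (viewed as an edge of G/W) is a bridge of G/W. -/

import Mathlib

/-- The contraction `G/W` of a set `W` of vertices of `G`: the simple graph on
`(V \ W) ∪ {⋆}` (encoded as `Option ↥(Wᶜ)`, with `none` playing the role of `⋆`) in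
which two vertices of `V \ W` are adjacent iff they are adjacent in `G`, and a vertex
`x ∈ V \ W` is adjacent to `⋆` iff `x` is adjacent in `G` to some vertex of `W`. -/
def contractSet {V : Type*} (G : SimpleGraph V) (W : Set V) :
    SimpleGraph (Option ↥(Wᶜ : Set V)) where
  Adj x y :=
    match x, y with
    | some a, some b => G.Adj a b
    | some a, none => ∃ w ∈ W, G.Adj (a : V) w
    | none, some b => ∃ w ∈ W, G.Adj (b : V) w
    | none, none => False
  symm := by
    constructor
    rintro (_ | a) (_ | b) h
    · exact h.elim
    · exact h
    · exact h
    · exact h.symm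
  loopless := by
    constructor
    rintro (_ | a) h
    · exact h.elim
    · exact G.irrefl h

/-- Let `G` be a simple graph, `W` a nonempty set of vertices inducing
a connected subgraph of `G`, and `e = {a, b}` an edge of `G` with `a ∉ W` and `b ∉ W`.
Then `e` is a bridge of `G` if and only if `e`, viewed as an edge of the contraction
`G/W`, is a bridge of `G/W`. -/
theorem stmt_6 {V : Type*} (G : SimpleGraph V) (W : Set V) (hWne : W.Nonempty)
    (hWconn : (G.induce W).Connected) (a b : V) (hab : G.Adj a b)
    (ha : a ∉ W) (hb : b ∉ W) :
    G.IsBridge s(a, b) ↔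
      (contractSet G W).IsBridge
        s(some ⟨a, ha⟩, some ⟨b, hb⟩) := by
  
  classical
  obtain ⟨w₀, hw₀⟩ := hWne
  simp only [SimpleGraph.isBridge_iff]
  have hadjH : (contractSet G W).Adj (some ⟨a, ha⟩) (some ⟨b, hb⟩) := hab
  set G' : SimpleGraph V := G \ SimpleGraph.fromEdgeSet {s(a, b)} with hG'
  set H' : SimpleGraph (Option ↥(Wᶜ : Set V)) :=
    contractSet G W \ SimpleGraph.fromEdgeSet {s(some ⟨a, ha⟩, some ⟨b, hb⟩)} with hH'
  have hne_ab : ∀ {u v : V}, u ∈ W → s(u, v) ≠ s(a, b) := by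
    intro u v hu h
    rw [Sym2.eq_iff] at h
    rcases h with ⟨rfl, rfl⟩ | ⟨rfl, rfl⟩
    · exact ha hu
    · exact hb hu
  -- the map V → Option ↥Wᶜ
  let f : V → Option ↥(Wᶜ : Set V) := fun v => if h : v ∈ W then none else some ⟨v, h⟩
  have stepA : ∀ {u v : V}, G'.Adj u v → H'.Reachable (f u) (f v) := by
    intro u v huv
    rw [hG', SimpleGraph.sdiff_adj, SimpleGraph.fromEdgeSet_adj] at huv
    obtain ⟨huv, hne⟩ := huv
    by_cases hu : u ∈ W <;> by_cases hv : v ∈ W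
    · simp only [f, dif_pos hu, dif_pos hv]
      exact SimpleGraph.Reachable.refl _
    · refine SimpleGraph.Adj.reachable ?_
      simp only [f, dif_pos hu, dif_neg hv]
      rw [hH', SimpleGraph.sdiff_adj, SimpleGraph.fromEdgeSet_adj]
      refine ⟨⟨u, hu, huv.symm⟩, ?_⟩
      rintro ⟨h, -⟩
      rw [Set.mem_singleton_iff, Sym2.eq_iff] at h
      rcases h with ⟨h, -⟩ | ⟨h, -⟩ <;> simp at h
    · refine SimpleGraph.Adj.reachable ?_
      simp only [f, dif_neg hu, dif_pos hv]
      rw [hH', SimpleGraph.sdiff_adj, SimpleGraph.fromEdgeSet_adj]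
      refine ⟨⟨v, hv, huv⟩, ?_⟩
      rintro ⟨h, -⟩
      rw [Set.mem_singleton_iff, Sym2.eq_iff] at h
      rcases h with ⟨-, h⟩ | ⟨-, h⟩ <;> simp at h
    · refine SimpleGraph.Adj.reachable ?_
      simp only [f, dif_neg hu, dif_neg hv]
      rw [hH', SimpleGraph.sdiff_adj, SimpleGraph.fromEdgeSet_adj]
      refine ⟨huv, ?_⟩
      rintro ⟨h, -⟩
      rw [Set.mem_singleton_iff, Sym2.eq_iff] at h
      refine hne ⟨?_, huv.ne⟩
      rw [Set.mem_singleton_iff, Sym2.eq_iff]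
      rcases h with ⟨h1, h2⟩ | ⟨h1, h2⟩
      · exact Or.inl ⟨congrArg Subtype.val (Option.some.inj h1),
          congrArg Subtype.val (Option.some.inj h2)⟩
      · exact Or.inr ⟨congrArg Subtype.val (Option.some.inj h1),
          congrArg Subtype.val (Option.some.inj h2)⟩
  have reachA : ∀ {u v : V}, G'.Reachable u v → H'.Reachable (f u) (f v) := by
    intro u v h
    obtain ⟨p⟩ := h
    induction p with
    | nil => exact SimpleGraph.Reachable.refl _
    | cons h p ih => exact (stepA h).trans ih
  -- reverse direction
  let g : Option ↥(Wᶜ : Set V) → V := fun x => x.elim w₀ Subtype.val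
  have edgeW : ∀ {u v : V}, u ∈ W → G.Adj u v → G'.Adj u v := by
    intro u v hu huv
    rw [hG', SimpleGraph.sdiff_adj, SimpleGraph.fromEdgeSet_adj]
    exact ⟨huv, fun h => hne_ab hu h.1⟩
  have reachW : ∀ {u v : V}, u ∈ W → v ∈ W → G'.Reachable u v := by
    intro u v hu hv
    have hr : (G.induce W).Reachable ⟨u, hu⟩ ⟨v, hv⟩ := hWconn ⟨u, hu⟩ ⟨v, hv⟩
    exact hr.map ⟨Subtype.val, fun {x y} h => edgeW x.2 h⟩
  have stepB : ∀ {x y : Option ↥(Wᶜ : Set V)}, H'.Adj x y → G'.Reachable (g x) (g y) := by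
    rintro (_ | ⟨u, hu⟩) (_ | ⟨v, hv⟩) hxy
    · exact hxy.1.elim
    · rw [hH', SimpleGraph.sdiff_adj] at hxy
      obtain ⟨w, hw, hvw⟩ := hxy.1
      show G'.Reachable w₀ v
      exact (reachW hw₀ hw).trans ((edgeW hw hvw.symm).reachable)
    · rw [hH', SimpleGraph.sdiff_adj] at hxy
      obtain ⟨w, hw, huw⟩ := hxy.1
      show G'.Reachable u w₀
      exact ((edgeW hw huw.symm).symm.reachable).trans (reachW hw hw₀)
    · rw [hH', SimpleGraph.sdiff_adj, SimpleGraph.fromEdgeSet_adj] at hxy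
      obtain ⟨hadj, hne⟩ := hxy
      show G'.Reachable u v
      refine SimpleGraph.Adj.reachable ?_
      rw [hG', SimpleGraph.sdiff_adj, SimpleGraph.fromEdgeSet_adj]
      refine ⟨hadj, ?_⟩
      rintro ⟨h, -⟩
      rw [Set.mem_singleton_iff, Sym2.eq_iff] at h
      refine hne ⟨?_, by simpa [Subtype.ext_iff] using hadj.ne⟩
      rw [Set.mem_singleton_iff, Sym2.eq_iff]
      rcases h with ⟨h1, h2⟩ | ⟨h1, h2⟩
      · exact Or.inl ⟨by simp [Subtype.ext_iff, h1], by simp [Subtype.ext_iff, h2]⟩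
      · exact Or.inr ⟨by simp [Subtype.ext_iff, h1], by simp [Subtype.ext_iff, h2]⟩
  have reachB : ∀ {x y : Option ↥(Wᶜ : Set V)},
      H'.Reachable x y → G'.Reachable (g x) (g y) := by
    intro x y h
    obtain ⟨p⟩ := h
    induction p with
    | nil => exact SimpleGraph.Reachable.refl _
    | cons h p ih => exact (stepB h).trans ih
  constructor
  · intro hnr
    refine fun hr => hnr ?_
    show G'.Reachable a b
    simpa [g] using reachB hr
  · intro hnr
    refine fun hr => hnr ?_
    show H'.Reachable _ _
    have := reachA hr
    simpa [f, dif_neg ha, dif_neg hb] using this
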